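/- arXiv:2103.04122 — 5 statements merged into one kernel-verified Lean document; each statement's English description precedes it below -/
import Mathlib

section
/- If K is a convex body in ℝ^d whose centroid is at the origin, then K ⊆ -d·K. -/
open MeasureTheory Set Pointwise

lemma key_centroid_ineq (d : ℕ) (K : Set (EuclideanSpace ℝ (Fin d)))
    (hKcompact : IsCompact K) (hKconv : Convex ℝ K)
    (hKint : (interior K).Nonempty)
    (hint : ∫ w in K, w ∂volume = 0)
    (f : EuclideanSpace ℝ (Fin d) →L[ℝ] ℝ) (M : ℝ)
    (hM : ∀ w ∈ K, f w ≤ M)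
    (x : EuclideanSpace ℝ (Fin d)) (hx : x ∈ K) :
    0 ≤ f x + d * M := by
  classical
  set μ : Measure (EuclideanSpace ℝ (Fin d)) := volume with hμ
  have hKm : MeasurableSet K := hKcompact.isClosed.measurableSet
  have hV0 : 0 < μ K := Measure.measure_pos_of_nonempty_interior _ hKint
  have hVtop : μ K ≠ ⊤ := hKcompact.measure_lt_top.ne
  set Vr : ℝ := (μ K).toReal with hVr
  have hVr0 : 0 < Vr := ENNReal.toReal_pos hV0.ne' hVtop
  have hfi : IntegrableOn (fun w => f w) K μ :=
    (f.continuous.continuousOn).integrableOn_compact hKcompact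
  have hconsti : IntegrableOn (fun _ => M) K μ :=
    integrableOn_const hKcompact.measure_lt_top.ne
  have hidi : IntegrableOn (fun w : EuclideanSpace ℝ (Fin d) => w) K μ :=
    continuousOn_id.integrableOn_compact hKcompact
  have hintf : ∫ w in K, f w ∂μ = 0 := by
    have h := f.integral_comp_comm hidi
    rw [hint] at h
    simpa using h
  have hdnn : (0:ℝ) ≤ d := Nat.cast_nonneg d
  have hMnn : 0 ≤ M := by
    have hle : ∫ w in K, f w ∂μ ≤ ∫ _ in K, M ∂μ :=
      setIntegral_mono_on hfi hconsti hKm hM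
    rw [hintf, setIntegral_const, smul_eq_mul, show μ.real K = Vr from rfl] at hle
    nlinarith
  set m : ℝ := f x with hm
  by_cases hc : M - m ≤ 0
  · nlinarith
  push_neg at hc
  set c : ℝ := M - m with hcdef
  -- nonnegativity and measurability of M - f on K
  have hgnn : 0 ≤ᵐ[μ.restrict K] fun w => M - f w :=
    (ae_restrict_iff' hKm).2 (ae_of_all _ fun w hw => by
      have := hM w hw; simp only [Pi.zero_apply]; linarith)
  have hgm : AEMeasurable (fun w => M - f w) (μ.restrict K) :=
    (measurable_const.sub f.continuous.measurable).aemeasurable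
  have hgi : Integrable (fun w => M - f w) (μ.restrict K) := hconsti.sub hfi
  -- layer cake formula
  have hlayer : ∫⁻ w, ENNReal.ofReal (M - f w) ∂(μ.restrict K)
      = ∫⁻ t in Ioi (0:ℝ), (μ.restrict K) {w | t ≤ M - f w} :=
    lintegral_eq_lintegral_meas_le _ hgnn hgm
  -- value of the left-hand side
  have hLHS : ∫⁻ w, ENNReal.ofReal (M - f w) ∂(μ.restrict K) = ENNReal.ofReal (M * Vr) := by
    rw [← ofReal_integral_eq_lintegral_ofReal hgi hgnn]
    congr 1
    rw [integral_sub hconsti hfi, hintf, setIntegral_const, smul_eq_mul, show μ.real K = Vr from rfl]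
    ring
  -- tail measure lower bound
  have htail : ∀ t ∈ Ioo (0:ℝ) c,
      ENNReal.ofReal ((1 - t/c)^d) * μ K ≤ (μ.restrict K) {w | t ≤ M - f w} := by
    intro t ht
    set s : ℝ := 1 - t / c with hs
    have hs0 : 0 ≤ s := by
      have h1 : t / c ≤ 1 := (div_le_one hc).2 ht.2.le
      simp only [hs]; linarith
    have hs1 : s ≤ 1 := by
      have h1 : 0 < t / c := div_pos ht.1 hc
      simp only [hs]; linarith
    have hsub : ((1 - s) • x) +ᵥ (s • K) ⊆ {w | t ≤ M - f w} ∩ K := by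
      rintro w hw
      obtain ⟨y, ⟨z, hz, rfl⟩, rfl⟩ := hw
      constructor
      · have hfz := hM z hz
        have hfw : f ((1 - s) • x +ᵥ s • z) = (1 - s) * f x + s * f z := by
          simp only [vadd_eq_add, map_add, ContinuousLinearMap.map_smul, smul_eq_mul]
        rw [mem_setOf_eq, hfw]
        have h1s : (1 - s) * c = t := by
          simp only [hs]
          field_simp
          ring
        have hszM : s * f z ≤ s * M := mul_le_mul_of_nonneg_left hfz hs0
        simp only [hcdef] at h1s
        nlinarith
      · have := hKconv (a := 1 - s) (b := s) hx hz (by linarith) hs0 (by ring)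
        simpa [vadd_eq_add] using this
    calc ENNReal.ofReal ((1 - t/c)^d) * μ K
        = μ (((1 - s) • x) +ᵥ (s • K)) := by
          rw [measure_vadd, Measure.addHaar_smul_of_nonneg _ hs0, finrank_euclideanSpace_fin]
      _ ≤ (μ.restrict K) {w | t ≤ M - f w} := by
          rw [Measure.restrict_apply' hKm]
          exact measure_mono hsub
  -- measurability of the tail function
  have htailmeas : Measurable fun t : ℝ => (μ.restrict K) {w | t ≤ M - f w} :=
    Antitone.measurable (fun t₁ t₂ h12 =>
      measure_mono (fun w hw => le_trans h12 hw))
  -- lower bound the right-hand side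
  have hRHS : ∫⁻ t in Ioo (0:ℝ) c, ENNReal.ofReal ((1 - t/c)^d) * μ K
      ≤ ∫⁻ t in Ioi (0:ℝ), (μ.restrict K) {w | t ≤ M - f w} := by
    refine le_trans (setLIntegral_mono htailmeas htail) ?_
    exact lintegral_mono_set Ioo_subset_Ioi_self
  -- compute the auxiliary real integral
  have hcont : Continuous fun t : ℝ => (1 - t/c)^d :=
    ((continuous_const.sub (continuous_id.div_const c)).pow d)
  have hii : IntervalIntegrable (fun t : ℝ => (1 - t/c)^d) volume 0 c :=
    hcont.intervalIntegrable 0 c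
  have hJ : ∫ t in Ioo (0:ℝ) c, (1 - t/c)^d = c / (d + 1) := by
    rw [← integral_Ioc_eq_integral_Ioo, ← intervalIntegral.integral_of_le hc.le]
    have h1 : ∀ t : ℝ, (1 - t/c)^d = (c⁻¹)^d * (c - t)^d := by
      intro t
      rw [← mul_pow]
      congr 1
      field_simp
    simp_rw [h1]
    rw [intervalIntegral.integral_const_mul]
    have h2 : ∫ t in (0:ℝ)..c, (c - t)^d = ∫ t in (c - c)..(c - 0), t^d :=
      intervalIntegral.integral_comp_sub_left (fun u => u^d) c
    rw [h2]
    simp only [sub_self, sub_zero]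
    rw [integral_pow]
    have hd1 : ((d:ℝ) + 1) ≠ 0 := by positivity
    field_simp
    rw [zero_pow (Nat.succ_ne_zero d), sub_zero, pow_succ, ← mul_assoc, ← mul_pow, one_div, inv_mul_cancel₀ hc.ne', one_pow, one_mul]
  -- compute the lower bound integral
  have hlb : ∫⁻ t in Ioo (0:ℝ) c, ENNReal.ofReal ((1 - t/c)^d) * μ K
      = ENNReal.ofReal (c / (d+1)) * μ K := by
    rw [lintegral_mul_const _ (hcont.measurable.ennreal_ofReal)]
    congr 1
    rw [← hJ]
    rw [← ofReal_integral_eq_lintegral_ofReal]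
    · exact (hii.1.mono_set Ioo_subset_Ioc_self)
    · refine (ae_restrict_iff' measurableSet_Ioo).2 (ae_of_all _ fun t ht => ?_)
      have h1 : t / c ≤ 1 := (div_le_one hc).2 ht.2.le
      have : (0:ℝ) ≤ 1 - t/c := by linarith
      positivity
  -- put everything together
  have hfinal : ENNReal.ofReal (c / (d+1)) * μ K ≤ ENNReal.ofReal (M * Vr) := by
    rw [← hlb, ← hLHS, hlayer]
    exact hRHS
  have hμKVr : μ K = ENNReal.ofReal Vr := (ENNReal.ofReal_toReal hVtop).symm
  rw [hμKVr, ← ENNReal.ofReal_mul (by positivity)] at hfinal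
  have hreal : c / (d+1) * Vr ≤ M * Vr :=
    (ENNReal.ofReal_le_ofReal_iff (by positivity)).1 hfinal
  have hcM : c / (d+1) ≤ M := le_of_mul_le_mul_right hreal hVr0
  have hd1 : (0:ℝ) < (d:ℝ) + 1 := by positivity
  rw [div_le_iff₀ hd1] at hcM
  simp only [hcdef] at hcM
  nlinarith

theorem stmt_0 (d : ℕ) (K : Set (EuclideanSpace ℝ (Fin d)))
    (hKcompact : IsCompact K) (hKconv : Convex ℝ K)
    (hKint : (interior K).Nonempty)
    (hcentroid : ⨍ x in K, x ∂volume = 0) :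
    K ⊆ (-(d : ℝ)) • K := by
  intro x hx
  rcases Nat.eq_zero_or_pos d with hd | hd
  · subst hd
    haveI : Subsingleton (EuclideanSpace ℝ (Fin 0)) :=
      ⟨fun a b => PiLp.ext fun i => i.elim0⟩
    exact Set.mem_smul_set.2 ⟨x, hx, Subsingleton.elim _ _⟩
  · have hdR : (0:ℝ) < d := by exact_mod_cast hd
    have hV0 : 0 < volume K := Measure.measure_pos_of_nonempty_interior _ hKint
    have hVtop : volume K ≠ ⊤ := hKcompact.measure_lt_top.ne
    have hint : ∫ w in K, w ∂volume = 0 := by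
      rw [setAverage_eq] at hcentroid
      have h1 : ((volume K).toReal)⁻¹ ≠ 0 :=
        inv_ne_zero (ENNReal.toReal_pos hV0.ne' hVtop).ne'
      rcases smul_eq_zero.1 hcentroid with h | h
      · exact absurd h h1
      · exact h
    by_contra hmem
    have hy0 : ((-(1:ℝ)/d) • x) ∉ K := by
      intro hy
      refine hmem (Set.mem_smul_set.2 ⟨_, hy, ?_⟩)
      rw [smul_smul, show (-(d:ℝ)) * (-(1:ℝ)/d) = 1 by field_simp, one_smul]
    obtain ⟨f, u, hfu, hu⟩ :=
      geometric_hahn_banach_closed_point hKconv hKcompact.isClosed hy0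
    have hkey := key_centroid_ineq d K hKcompact hKconv hKint hint f u
      (fun w hw => (hfu w hw).le) x hx
    have hfy : f ((-(1:ℝ)/d) • x) = (-(1:ℝ)/d) * f x := by
      rw [ContinuousLinearMap.map_smul]; simp [smul_eq_mul]
    rw [hfy] at hu
    have h2 : u * d < (-(1:ℝ)/d) * f x * d := mul_lt_mul_of_pos_right hu hdR
    have h3 : (-(1:ℝ)/d) * f x * d = - f x := by field_simp
    linarith
end

section
/- If K is a convex body in ℝ^d whose centroid is at the origin, then the polar body K° satisfies K° ⊆ -d·K°. -/
open MeasureTheory Set Pointwise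
open scoped ENNReal

lemma key_lb (d : ℕ) (K : Set (EuclideanSpace ℝ (Fin d)))
    (hKcompact : IsCompact K) (hKconv : Convex ℝ K)
    (hKint : (interior K).Nonempty)
    (hcentroid : ⨍ x in K, x ∂volume = 0)
    (p : EuclideanSpace ℝ (Fin d))
    (hp : ∀ x ∈ K, (inner ℝ p x : ℝ) ≤ 1) :
    ∀ x ∈ K, -(d : ℝ) ≤ (inner ℝ p x : ℝ) := by
  have hKne : K.Nonempty := hKint.mono interior_subset
  have hKmeas : MeasurableSet K := hKcompact.isClosed.measurableSet
  set V : ℝ≥0∞ := volume K with hV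
  have hV0 : V ≠ 0 := by
    refine (lt_of_lt_of_le (isOpen_interior.measure_pos volume hKint)
      (measure_mono interior_subset)).ne'
  have hVtop : V ≠ ⊤ := hKcompact.measure_lt_top.ne
  have hVR : 0 < V.toReal := ENNReal.toReal_pos hV0 hVtop
  -- integral of identity is zero
  have hid_int : IntegrableOn (fun x => x) K volume :=
    continuous_id.continuousOn.integrableOn_compact hKcompact
  have hintK : ∫ x in K, x ∂volume = 0 := by
    have := hcentroid
    rw [setAverage_eq] at this
    rcases smul_eq_zero.mp this with h | h
    · exact absurd h (by positivity)
    · exact h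
  set f : EuclideanSpace ℝ (Fin d) → ℝ := fun x => inner ℝ p x with hfdef
  have hf_cont : Continuous f := (innerSL ℝ p).continuous
  have hf_int : IntegrableOn f K volume := hf_cont.continuousOn.integrableOn_compact hKcompact
  have hf0 : ∫ x in K, f x ∂volume = 0 := by
    have := (innerSL ℝ p).integral_comp_comm hid_int
    simpa [hintK] using this
  -- minimum point
  obtain ⟨x₀, hx₀K, hx₀min⟩ := hKcompact.exists_isMinOn hKne hf_cont.continuousOn
  set m : ℝ := -f x₀ with hmdef
  suffices hmd : m ≤ d by
    intro x hx
    have h1 : f x₀ ≤ f x := hx₀min hx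
    show -(d:ℝ) ≤ f x
    simp only [hmdef] at hmd
    linarith
  by_cases hm : m ≤ 0
  · exact hm.trans (by positivity)
  push_neg at hm
  set L : ℝ := 1 + m with hLdef
  have hL : 0 < L := by linarith
  set g : EuclideanSpace ℝ (Fin d) → ℝ := fun x => 1 - f x with hgdef
  have hg_int : IntegrableOn g K volume :=
    (integrableOn_const hKcompact.measure_lt_top.ne).sub hf_int
  have hg_val : ∫ x in K, g x ∂volume = V.toReal := by
    rw [integral_sub (integrableOn_const (C := (1:ℝ)) hKcompact.measure_lt_top.ne) hf_int]
    simp [hf0, Measure.real, hV]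
  -- layer cake
  have hg_nn : 0 ≤ᵐ[volume.restrict K] g := by
    filter_upwards [ae_restrict_mem hKmeas] with x hx
    have h1 : f x ≤ 1 := hp x hx
    show 0 ≤ g x
    simp only [hgdef]
    linarith
  have layer : ENNReal.ofReal (∫ x in K, g x ∂volume)
      = ∫⁻ t in Ioi (0:ℝ), volume.restrict K {a | t ≤ g a} := by
    rw [← lintegral_eq_lintegral_meas_le (volume.restrict K) hg_nn
      (continuous_const.sub hf_cont).aemeasurable]
    rw [ofReal_integral_eq_lintegral_ofReal hg_int hg_nn]
  -- homothety lower bound on superlevel sets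
  have hsub : ∀ t ∈ Ioc (0:ℝ) L,
      ENNReal.ofReal (((L - t)/L)^d) * V ≤ volume.restrict K {a | t ≤ g a} := by
    intro t ht
    set θ : ℝ := (L - t)/L with hθdef
    have hθ0 : 0 ≤ θ := by
      apply div_nonneg _ hL.le
      linarith [ht.2]
    have hθ1 : θ ≤ 1 := by
      rw [div_le_one hL]
      linarith [ht.1]
    have himg : (AffineMap.homothety x₀ θ) '' K ⊆ {a | t ≤ g a} ∩ K := by
      rintro - ⟨x, hx, rfl⟩
      have hmem : AffineMap.homothety x₀ θ x ∈ K := by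
        have : AffineMap.homothety x₀ θ x = θ • x + (1 - θ) • x₀ := by
          simp [AffineMap.homothety_apply]
          module
        rw [this]
        exact hKconv hx hx₀K hθ0 (by linarith) (by ring)
      refine ⟨?_, hmem⟩
      have hfval : f (AffineMap.homothety x₀ θ x) = θ * f x + (1 - θ) * f x₀ := by
        have : AffineMap.homothety x₀ θ x = θ • x + (1 - θ) • x₀ := by
          simp [AffineMap.homothety_apply]; module
        rw [this]
        show (inner ℝ p (θ • x + (1 - θ) • x₀) : ℝ) = _
        rw [inner_add_right, real_inner_smul_right, real_inner_smul_right]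
      have h1 : f x ≤ 1 := hp x hx
      have h2 : θ * f x + (1 - θ) * f x₀ ≤ θ * 1 + (1 - θ) * (-m) := by
        have : f x₀ = -m := by simp [hmdef]
        rw [this]
        have := mul_le_mul_of_nonneg_left h1 hθ0
        linarith
      have h3 : θ * 1 + (1 - θ) * (-m) = 1 - t := by
        simp only [hθdef]
        field_simp
        ring
      show t ≤ g _
      simp only [hgdef, hfval]
      linarith
    calc ENNReal.ofReal (((L - t)/L)^d) * V
        = volume ((AffineMap.homothety x₀ θ) '' K) := by
          rw [Measure.addHaar_image_homothety, finrank_euclideanSpace_fin,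
            abs_of_nonneg (pow_nonneg hθ0 d)]
      _ ≤ volume ({a | t ≤ g a} ∩ K) := measure_mono himg
      _ = volume.restrict K {a | t ≤ g a} := by
          rw [Measure.restrict_apply (show MeasurableSet {a | t ≤ g a} from measurableSet_le measurable_const
            (continuous_const.sub hf_cont).measurable)]
  -- assemble inequality
  have main : ENNReal.ofReal (L / (d+1)) * V ≤ ENNReal.ofReal V.toReal := by
    calc ENNReal.ofReal (L / (d+1)) * V
        = (∫⁻ t in Ioc (0:ℝ) L, ENNReal.ofReal (((L - t)/L)^d)) * V := by
          congr 1
          rw [← ofReal_integral_eq_lintegral_ofReal]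
          · congr 1
            rw [← intervalIntegral.integral_of_le hL.le]
            have : ∀ t ∈ uIcc (0:ℝ) L, ((L - t)/L)^d = (L-t)^d * (L^d)⁻¹ := by
              intro t _; rw [div_pow]; ring
            rw [intervalIntegral.integral_congr this]
            rw [intervalIntegral.integral_mul_const]
            have := intervalIntegral.integral_comp_sub_left (fun u => u ^ d) L
              (a := 0) (b := L)
            simp only [sub_zero, sub_self] at this
            rw [this, integral_pow]
            field_simp
            ring
          · exact ((Continuous.continuousOn (by fun_prop : Continuous
                (fun t : ℝ => ((L - t)/L)^d))).integrableOn_compact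
                (isCompact_Icc (a := (0:ℝ)) (b := L))).mono_set Ioc_subset_Icc_self
          · filter_upwards [ae_restrict_mem measurableSet_Ioc] with t ht
            have h1 : (0:ℝ) ≤ (L - t)/L := div_nonneg (by linarith [ht.2]) hL.le
            positivity
      _ = ∫⁻ t in Ioc (0:ℝ) L, ENNReal.ofReal (((L - t)/L)^d) * V := by
          rw [lintegral_mul_const]
          fun_prop
      _ ≤ ∫⁻ t in Ioc (0:ℝ) L, volume.restrict K {a | t ≤ g a} := by
          apply setLIntegral_mono' measurableSet_Ioc hsub
      _ ≤ ∫⁻ t in Ioi (0:ℝ), volume.restrict K {a | t ≤ g a} := by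
          apply lintegral_mono_set Ioc_subset_Ioi_self
      _ = ENNReal.ofReal V.toReal := by rw [← layer, hg_val]
  -- finish
  have hVne : ENNReal.ofReal V.toReal = V := ENNReal.ofReal_toReal hVtop
  rw [hVne] at main
  have : ENNReal.ofReal (L / (d+1)) ≤ 1 := by
    by_contra hcon
    push_neg at hcon
    have := ENNReal.mul_lt_mul_left hV0 hVtop hcon
    simp only [one_mul] at this
    exact absurd main (not_le.mpr this)
  have hLd : L / (d+1) ≤ 1 := by
    by_contra hcon
    push_neg at hcon
    exact absurd this (not_le.mpr (ENNReal.one_lt_ofReal.mpr hcon))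
  have : L ≤ d + 1 := by
    rwa [div_le_one (by positivity)] at hLd
  simp only [hLdef] at this
  linarith

theorem stmt_1 (d : ℕ) (K : Set (EuclideanSpace ℝ (Fin d)))
    (hKcompact : IsCompact K) (hKconv : Convex ℝ K)
    (hKint : (interior K).Nonempty)
    (hcentroid : ⨍ x in K, x ∂volume = 0) :
    {p : EuclideanSpace ℝ (Fin d) | ∀ x ∈ K, inner ℝ p x ≤ (1 : ℝ)} ⊆
      (-(d : ℝ)) • {p : EuclideanSpace ℝ (Fin d) | ∀ x ∈ K, inner ℝ p x ≤ (1 : ℝ)} := by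
  intro p hp
  rcases Nat.eq_zero_or_pos d with hd | hd
  · subst hd
    have hS : (0 : EuclideanSpace ℝ (Fin 0)) ∈
        {p : EuclideanSpace ℝ (Fin 0) | ∀ x ∈ K, inner ℝ p x ≤ (1 : ℝ)} := by
      intro x hx
      simp
    have hp0 : p = 0 := Subsingleton.elim p 0
    rw [hp0]
    exact ⟨0, hS, by simp⟩
  · have hdpos : (0:ℝ) < d := by exact_mod_cast hd
    have key := key_lb d K hKcompact hKconv hKint hcentroid p hp
    refine ⟨(-(d:ℝ))⁻¹ • p, ?_, ?_⟩
    · intro x hx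
      have hkx := key x hx
      have : (inner ℝ ((-(d:ℝ))⁻¹ • p) x : ℝ) = (-(d:ℝ))⁻¹ * inner ℝ p x := by
        rw [real_inner_smul_left]
      rw [this]
      have hne : -(d:ℝ) < 0 := by linarith
      rw [show ((-(d:ℝ))⁻¹ * inner ℝ p x : ℝ) = inner ℝ p x / (-(d:ℝ)) by
        rw [div_eq_inv_mul]]
      rw [div_le_one_of_neg hne]
      linarith
    · show -(d:ℝ) • ((-(d:ℝ))⁻¹ • p) = p
      rw [smul_smul, mul_inv_cancel₀ (by linarith : -(d:ℝ) ≠ 0), one_smul]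
end

section
/- Let K be a convex body in ℝ^d and let E be its John ellipsoid (the largest-volume ellipsoid contained in K), centered at z. Then (K − z)° ⊆ −d·(K − z)°. -/
open MeasureTheory Set Pointwise Matrix

/-- `E` is an ellipsoid in `ℝ^d` centered at `z`: the image of the closed unit
ball under an invertible linear map, translated to `z`. -/
def IsEllipsoidAt {d : ℕ} (E : Set (EuclideanSpace ℝ (Fin d)))
    (z : EuclideanSpace ℝ (Fin d)) : Prop :=
  ∃ L : EuclideanSpace ℝ (Fin d) ≃ₗ[ℝ] EuclideanSpace ℝ (Fin d),
    E = (fun x => z + L x) '' Metric.closedBall 0 1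

/-- `E` is an ellipsoid (centered at some point). -/
def IsEllipsoid {d : ℕ} (E : Set (EuclideanSpace ℝ (Fin d))) : Prop :=
  ∃ z, IsEllipsoidAt E z

noncomputable section JohnAux

variable {d : ℕ}

/-- rank-one projection onto the span of `u`. -/
def projL {d : ℕ} (u : EuclideanSpace ℝ (Fin d)) :
    EuclideanSpace ℝ (Fin d) →ₗ[ℝ] EuclideanSpace ℝ (Fin d) where
  toFun x := (inner ℝ u x : ℝ) • u
  map_add' x y := by simp [inner_add_right, add_smul]
  map_smul' c x := by simp [inner_smul_right, mul_smul]

def Gmap {d : ℕ} (u : EuclideanSpace ℝ (Fin d)) (a b : ℝ) :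
    EuclideanSpace ℝ (Fin d) →ₗ[ℝ] EuclideanSpace ℝ (Fin d) :=
  b • LinearMap.id + (a - b) • projL u

lemma Gmap_apply (u : EuclideanSpace ℝ (Fin d)) (a b : ℝ) (x : EuclideanSpace ℝ (Fin d)) :
    Gmap u a b x = b • x + ((a - b) * (inner ℝ u x : ℝ)) • u := by
  simp [Gmap, projL, mul_smul]

lemma det_Gmap (u : EuclideanSpace ℝ (Fin d)) (hu : ‖u‖ = 1) (a b : ℝ) (hb : b ≠ 0) :
    LinearMap.det (Gmap u a b) = b ^ d * (a / b) := by
  classical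
  have husq : (inner ℝ u u : ℝ) = 1 := by
    rw [real_inner_self_eq_norm_sq, hu]; norm_num
  set bas := (EuclideanSpace.basisFun (Fin d) ℝ).toBasis
  rw [← LinearMap.det_toMatrix bas]
  have hmat : LinearMap.toMatrix bas bas (Gmap u a b)
      = b • (1 + ((a-b)/b) • (Matrix.replicateCol Unit (fun i => u i) * Matrix.replicateRow Unit (fun i => u i))) := by
    ext i j
    rw [LinearMap.toMatrix_apply]
    simp only [bas, OrthonormalBasis.coe_toBasis_repr_apply, OrthonormalBasis.coe_toBasis,
      EuclideanSpace.basisFun_repr, EuclideanSpace.basisFun_apply]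
    rw [Gmap_apply]
    have hin : (inner ℝ u (EuclideanSpace.single j (1:ℝ)) : ℝ) = u j := by
      rw [real_inner_comm, EuclideanSpace.inner_single_left]
      simp
    simp only [hin, PiLp.add_apply, PiLp.smul_apply, smul_eq_mul]
    rw [EuclideanSpace.single_apply]
    simp only [Matrix.smul_apply, Matrix.add_apply, Matrix.mul_apply, Matrix.one_apply,
      Matrix.smul_apply, Matrix.replicateCol_apply, Matrix.replicateRow_apply, Finset.univ_unique,
      Finset.sum_singleton, smul_eq_mul]
    by_cases hij : i = j <;> simp [hij] <;> field_simp <;> ring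
  have hdot : (fun i => u i) ⬝ᵥ (fun i => u i) = (1:ℝ) := by
    rw [← husq, PiLp.inner_apply]
    simp [dotProduct, RCLike.inner_apply, sq]
  rw [hmat, Matrix.det_smul, ← Matrix.smul_mul, ← Matrix.replicateCol_smul,
    Matrix.det_one_add_replicateCol_mul_replicateRow]
  rw [dotProduct_smul] at *
  simp only [Fintype.card_fin, smul_eq_mul]
  rw [hdot]
  field_simp
  ring

lemma Gmap_comp (u : EuclideanSpace ℝ (Fin d)) (hu : ‖u‖ = 1) (a b a' b' : ℝ) :
    (Gmap u a b).comp (Gmap u a' b') = Gmap u (a * a') (b * b') := by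
  have husq : (inner ℝ u u : ℝ) = 1 := by
    rw [real_inner_self_eq_norm_sq, hu]; norm_num
  refine LinearMap.ext fun x => ?_
  simp only [LinearMap.comp_apply, Gmap_apply, inner_add_right, inner_smul_right, husq,
    smul_smul, smul_add]
  module

lemma Gmap_one (u : EuclideanSpace ℝ (Fin d)) : Gmap u 1 1 = LinearMap.id := by
  ext x
  simp [Gmap_apply]

/-- Gmap as a linear equivalence, for nonzero `a`, `b`. -/
def Gequiv (u : EuclideanSpace ℝ (Fin d)) (hu : ‖u‖ = 1) (a b : ℝ) (ha : a ≠ 0) (hb : b ≠ 0) :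
    EuclideanSpace ℝ (Fin d) ≃ₗ[ℝ] EuclideanSpace ℝ (Fin d) :=
  LinearEquiv.ofLinear (Gmap u a b) (Gmap u a⁻¹ b⁻¹)
    (by rw [Gmap_comp u hu, mul_inv_cancel₀ ha, mul_inv_cancel₀ hb, Gmap_one])
    (by rw [Gmap_comp u hu, inv_mul_cancel₀ ha, inv_mul_cancel₀ hb, Gmap_one])

lemma Gequiv_apply (u : EuclideanSpace ℝ (Fin d)) (hu : ‖u‖ = 1) (a b : ℝ) (ha : a ≠ 0)
    (hb : b ≠ 0) (x : EuclideanSpace ℝ (Fin d)) :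
    Gequiv u hu a b ha hb x = b • x + ((a - b) * (inner ℝ u x : ℝ)) • u := by
  rw [Gequiv, LinearEquiv.ofLinear_apply, Gmap_apply]

lemma vol_affine_image (w : EuclideanSpace ℝ (Fin d))
    (f : EuclideanSpace ℝ (Fin d) →ₗ[ℝ] EuclideanSpace ℝ (Fin d))
    (s : Set (EuclideanSpace ℝ (Fin d))) :
    volume ((fun x => w + f x) '' s) = ENNReal.ofReal |LinearMap.det f| * volume s := by
  have h1 : (fun x => w + f x) '' s = (fun t => w + t) '' (f '' s) := by
    rw [← Set.image_comp]; rfl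
  rw [h1, Set.image_add_left, measure_preimage_add, Measure.addHaar_image_linearMap]

lemma norm_comb {d : ℕ} (u x : EuclideanSpace ℝ (Fin d)) (hu : ‖u‖ = 1) (A t : ℝ) :
    ‖A • u + t • x‖^2 = A^2 + 2*A*t*(inner ℝ u x : ℝ) + t^2*‖x‖^2 := by
  rw [norm_add_sq_real, real_inner_smul_left, real_inner_smul_right,
    norm_smul, norm_smul, hu]
  simp only [Real.norm_eq_abs]
  rw [mul_pow, mul_pow, sq_abs, sq_abs]
  ring

lemma john_numeric (d : ℕ) (hd : 1 ≤ d) (h ε σ a b : ℝ)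
    (hhd : (d:ℝ) < h) (hd1 : 1 ≤ (d:ℝ)) (hε0 : 0 < ε) (hε12 : ε ≤ 1/2)
    (hεb : ((h-1)*((d:ℝ)-1)+1) * ε ≤ h - d)
    (hσdef : σ = ε*(h-1)/2) (hadef : a = 1 + σ) (hb2 : b^2 = 1-ε) (hb0 : 0 < b) :
    1 < a * b^(d-1) := by
  have ha : 0 < a := by rw [hadef, hσdef]; nlinarith
  have hbern : 1 - ((d:ℝ)-1)*ε ≤ (1-ε)^(d-1) := by
    have hber := one_add_mul_le_pow (by linarith : (-2:ℝ) ≤ -ε) (d-1)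
    have hcast : ((d-1 : ℕ) : ℝ) = (d:ℝ) - 1 := by
      rw [Nat.cast_sub hd, Nat.cast_one]
    rw [hcast, mul_neg, ← sub_eq_add_neg, ← sub_eq_add_neg] at hber
    exact hber
  have hpownn : (0:ℝ) ≤ (1-ε)^(d-1) := pow_nonneg (by linarith) _
  have hsq : (a * b^(d-1))^2 = a^2 * (1-ε)^(d-1) := by
    rw [mul_pow, ← pow_mul, mul_comm (d-1) 2, pow_mul, hb2]
  have key : 1 < a^2 * (1-ε)^(d-1) := by
    have c1 : (1 + ε*(h-1)) * (1 - ((d:ℝ)-1)*ε) > 1 := by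
      nlinarith [mul_le_mul_of_nonneg_right hεb hε0.le, hε0, hhd]
    have c2 : (1 + ε*(h-1)) * ((1-ε)^(d-1)) ≥ (1 + ε*(h-1)) * (1 - ((d:ℝ)-1)*ε) := by
      apply mul_le_mul_of_nonneg_left hbern
      nlinarith [mul_nonneg hε0.le (by linarith : (0:ℝ) ≤ h - 1)]
    have c3 : a^2 * ((1-ε)^(d-1)) ≥ (1 + ε*(h-1)) * ((1-ε)^(d-1)) := by
      apply mul_le_mul_of_nonneg_right _ hpownn
      rw [hadef, hσdef]
      nlinarith [sq_nonneg (ε*(h-1)/2)]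
    linarith
  have ht0 : 0 < a * b^(d-1) := mul_pos ha (pow_pos hb0 _)
  by_contra hle'
  push_neg at hle'
  have hone : (a * b^(d-1))^2 ≤ 1 := pow_le_one₀ ht0.le hle'
  rw [hsq] at hone
  linarith

set_option maxHeartbeats 1000000 in
/-- Main geometric lemma: John's containment. If the image of the unit ball under
`x ↦ z + L x` is a maximal-volume ellipsoid inside the convex set `K`, then every
point of `K` satisfies `‖L.symm (x - z)‖ ≤ d`. -/
lemma john_bound (hd : 1 ≤ d) (K : Set (EuclideanSpace ℝ (Fin d)))
    (hKconv : Convex ℝ K) (z : EuclideanSpace ℝ (Fin d))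
    (L : EuclideanSpace ℝ (Fin d) ≃ₗ[ℝ] EuclideanSpace ℝ (Fin d))
    (hEK : (fun x => z + L x) '' Metric.closedBall 0 1 ⊆ K)
    (hmax : ∀ E' : Set (EuclideanSpace ℝ (Fin d)), IsEllipsoid E' → E' ⊆ K →
      volume E' ≤ volume ((fun x => z + L x) '' Metric.closedBall 0 1)) :
    ∀ x ∈ K, ‖L.symm (x - z)‖ ≤ d := by
  by_contra hcon
  push_neg at hcon
  obtain ⟨x0, hx0K, hx0⟩ := hcon
  set y0 := L.symm (x0 - z) with hy0def
  set h := ‖y0‖ with hhdef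
  have hd1 : (1:ℝ) ≤ (d:ℝ) := by exact_mod_cast hd
  have hhd : (d:ℝ) < h := hx0
  have hh1 : (1:ℝ) < h := lt_of_le_of_lt hd1 hhd
  have hy0ne : y0 ≠ 0 := by
    intro h0
    rw [hhdef, h0, norm_zero] at hhd
    linarith
  set u := ‖y0‖⁻¹ • y0 with hudef
  have hu : ‖u‖ = 1 := norm_smul_inv_norm hy0ne
  have hy0u : y0 = h • u := by
    rw [hudef, smul_smul, mul_inv_cancel₀ (by rw [← hhdef]; linarith : ‖y0‖ ≠ 0), one_smul]
  clear_value y0 h u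
  -- parameters
  set ε := min (1/2 : ℝ) ((h - d) / ((h-1)*((d:ℝ)-1)+1)) with hεdef
  have hden : 0 < (h-1)*((d:ℝ)-1)+1 := by nlinarith
  have hε0 : 0 < ε := lt_min (by norm_num) (div_pos (by linarith) hden)
  have hε12 : ε ≤ 1/2 := min_le_left _ _
  have hεb : ((h-1)*((d:ℝ)-1)+1) * ε ≤ h - d := by
    have h2 : ε ≤ (h - d) / ((h-1)*((d:ℝ)-1)+1) := min_le_right _ _
    calc ((h-1)*((d:ℝ)-1)+1) * ε ≤ ((h-1)*((d:ℝ)-1)+1) * ((h - d) / ((h-1)*((d:ℝ)-1)+1)) :=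
          mul_le_mul_of_nonneg_left h2 hden.le
      _ = h - d := mul_div_cancel₀ _ hden.ne'
  set σ := ε*(h-1)/2 with hσdef
  set a := 1 + σ with hadef
  set b := Real.sqrt (1-ε) with hbdef
  have hσ0 : 0 ≤ σ := by
    have : (0:ℝ) < h - 1 := by linarith
    positivity
  have ha : 0 < a := by linarith
  have hb2 : b^2 = 1 - ε := Real.sq_sqrt (by linarith)
  have hb0 : 0 < b := Real.sqrt_pos.mpr (by linarith)
  clear_value ε σ a b
  set K' := (fun y => z + L y) ⁻¹' K with hK'def
  have hK'conv : Convex ℝ K' := by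
    intro x hx y hy α β hα hβ hαβ
    simp only [hK'def, mem_preimage] at *
    have hz : z = α • z + β • z := by rw [← add_smul, hαβ, one_smul]
    have : z + L (α • x + β • y) = α • (z + L x) + β • (z + L y) := by
      rw [map_add, L.map_smul, L.map_smul, smul_add, smul_add]
      nth_rewrite 1 [hz]
      module
    rw [this]
    exact hKconv hx hy hα hβ hαβ
  have hBK' : Metric.closedBall (0 : EuclideanSpace ℝ (Fin d)) 1 ⊆ K' :=
    fun x hx => hEK (mem_image_of_mem _ hx)
  have hy0K' : y0 ∈ K' := by
    simp only [hK'def, mem_preimage, hy0def, LinearEquiv.apply_symm_apply]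
    have : z + (x0 - z) = x0 := by abel
    rwa [this]
  set Gq := Gequiv u hu a b ha.ne' hb0.ne' with hGqdef
  -- the candidate larger ellipsoid lies in K'
  have hmain : ∀ x ∈ Metric.closedBall (0 : EuclideanSpace ℝ (Fin d)) 1,
      σ • u + Gq x ∈ K' := by
    intro x hx
    have hx1 : ‖x‖ ≤ 1 := by rwa [Metric.mem_closedBall, dist_zero_right] at hx
    set s := (inner ℝ u x : ℝ) with hsdef
    have hs1 : |s| ≤ 1 := by
      have := abs_real_inner_le_norm u x
      rw [hu, one_mul] at this
      linarith
    have hs1' : -1 ≤ s ∧ s ≤ 1 := abs_le.mp hs1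
    set lam := ε * (1 + s) / 2 with hlamdef
    have hlam0 : 0 ≤ lam := by
      have : 0 ≤ 1 + s := by linarith [hs1'.1]
      positivity
    have hlam1 : lam < 1 := by nlinarith [hs1'.2]
    set y := σ • u + Gq x with hydef
    set v := y - lam • y0 with hvdef
    have hv : v = (σ + (a-b)*s - lam*h) • u + b • x := by
      rw [hvdef, hydef, hGqdef, Gequiv_apply, hy0u, ← hsdef]
      module
    have hnormv2 : ‖v‖^2 ≤ (1 - lam)^2 := by
      have hA : ‖v‖^2 = (σ + (a-b)*s - lam*h)^2 + 2*(σ + (a-b)*s - lam*h)*b*s + b^2*‖x‖^2 := by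
        rw [hv, norm_comb u x hu, ← hsdef]
      have e1 : (σ + (a-b)*s - lam*h) + b*s = s - lam := by
        rw [hadef, hσdef, hlamdef]; ring
      have e2 : (s - lam)^2 + (1-ε)*(1-s^2) = (1-lam)^2 := by
        rw [hlamdef]; ring
      have hs2 : s^2 ≤ ‖x‖^2 := by
        have h0 : |s| ≤ ‖x‖ := by
          have := abs_real_inner_le_norm u x
          rwa [hu, one_mul] at this
        nlinarith [abs_nonneg s, norm_nonneg x, sq_abs s]
      have hx2 : ‖x‖^2 ≤ 1 := by nlinarith [norm_nonneg x]
      nlinarith [hA, e1, e2, hs2, hx2, hb2, hε12, hε0]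
    have hnv : ‖v‖ ≤ 1 - lam := by
      nlinarith [norm_nonneg v, hnormv2]
    set c := (1 - lam)⁻¹ • v with hcdef
    have h1lam : (0:ℝ) < 1 - lam := by linarith
    have hcball : c ∈ Metric.closedBall (0 : EuclideanSpace ℝ (Fin d)) 1 := by
      rw [Metric.mem_closedBall, dist_zero_right, hcdef, norm_smul, Real.norm_eq_abs,
        abs_of_nonneg (inv_nonneg.mpr h1lam.le)]
      calc (1 - lam)⁻¹ * ‖v‖ ≤ (1 - lam)⁻¹ * (1 - lam) :=
            mul_le_mul_of_nonneg_left hnv (inv_nonneg.mpr h1lam.le)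
        _ = 1 := inv_mul_cancel₀ h1lam.ne'
    have hyc : y = lam • y0 + (1 - lam) • c := by
      rw [hcdef, smul_inv_smul₀ h1lam.ne', hvdef]
      abel
    show y ∈ K'
    rw [hyc]
    exact hK'conv hy0K' (hBK' hcball) hlam0 (by linarith) (by ring)
  -- the larger ellipsoid
  set z' := z + L (σ • u) with hz'def
  set E'' := (fun x => z' + (Gq.trans L) x) '' Metric.closedBall 0 1 with hE''def
  have hE''ell : IsEllipsoid E'' := ⟨z', Gq.trans L, rfl⟩
  have hE''K : E'' ⊆ K := by
    rintro _ ⟨x, hx, rfl⟩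
    show z' + (Gq.trans L) x ∈ K
    have h1 : z' + (Gq.trans L) x = z + L (σ • u + Gq x) := by
      rw [hz'def, LinearEquiv.trans_apply, map_add]
      abel
    rw [h1]
    exact hmain x hx
  have hvol := hmax E'' hE''ell hE''K
  -- volume computations
  have hdetL : LinearMap.det (L : EuclideanSpace ℝ (Fin d) →ₗ[ℝ] EuclideanSpace ℝ (Fin d)) ≠ 0 :=
    (LinearEquiv.isUnit_det' L).ne_zero
  have himg1 : (fun x => z' + (Gq.trans L) x)
      = (fun x => z' + ((L : EuclideanSpace ℝ (Fin d) →ₗ[ℝ] EuclideanSpace ℝ (Fin d)).comp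
          (Gmap u a b)) x) := by
    funext x
    simp only [LinearEquiv.trans_apply, LinearMap.comp_apply, LinearEquiv.coe_coe]
    rw [hGqdef, Gequiv_apply, Gmap_apply]
  have himg2 : (fun x : EuclideanSpace ℝ (Fin d) => z + L x)
      = (fun x => z + (L : EuclideanSpace ℝ (Fin d) →ₗ[ℝ] EuclideanSpace ℝ (Fin d)) x) := by
    funext x
    simp only [LinearEquiv.coe_coe]
  have hvolE'' : volume E'' = ENNReal.ofReal
      (|LinearMap.det (L : EuclideanSpace ℝ (Fin d) →ₗ[ℝ] EuclideanSpace ℝ (Fin d))|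
        * |LinearMap.det (Gmap u a b)|)
      * volume (Metric.closedBall (0 : EuclideanSpace ℝ (Fin d)) 1) := by
    rw [hE''def, himg1, vol_affine_image, LinearMap.det_comp, abs_mul]
  have hvolE : volume ((fun x => z + L x) '' Metric.closedBall (0:EuclideanSpace ℝ (Fin d)) 1)
      = ENNReal.ofReal
        (|LinearMap.det (L : EuclideanSpace ℝ (Fin d) →ₗ[ℝ] EuclideanSpace ℝ (Fin d))|)
      * volume (Metric.closedBall (0 : EuclideanSpace ℝ (Fin d)) 1) := by
    rw [himg2, vol_affine_image]
  have hvB0 : volume (Metric.closedBall (0 : EuclideanSpace ℝ (Fin d)) 1) ≠ 0 :=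
    (Metric.measure_closedBall_pos _ _ one_pos).ne'
  have hvBtop : volume (Metric.closedBall (0 : EuclideanSpace ℝ (Fin d)) 1) ≠ ⊤ :=
    (isCompact_closedBall _ _).measure_lt_top.ne
  rw [hvolE'', hvolE] at hvol
  clear_value K' Gq z' E''
  have hle := (ENNReal.mul_le_mul_iff_left hvB0 hvBtop).mp hvol
  have habs : |LinearMap.det (L : EuclideanSpace ℝ (Fin d) →ₗ[ℝ] EuclideanSpace ℝ (Fin d))|
      * |LinearMap.det (Gmap u a b)|
      ≤ |LinearMap.det (L : EuclideanSpace ℝ (Fin d) →ₗ[ℝ] EuclideanSpace ℝ (Fin d))| := by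
    rw [← ENNReal.ofReal_le_ofReal_iff (abs_nonneg _)]
    exact hle
  have hdetLpos : 0 < |LinearMap.det (L : EuclideanSpace ℝ (Fin d) →ₗ[ℝ] EuclideanSpace ℝ (Fin d))| :=
    abs_pos.mpr hdetL
  have hdetG1 : |LinearMap.det (Gmap u a b)| ≤ 1 :=
    le_of_mul_le_mul_left (by rw [mul_one]; exact habs) hdetLpos
  -- but the determinant is > 1
  have hdetG : LinearMap.det (Gmap u a b) = a * b^(d-1) := by
    rw [det_Gmap u hu a b hb0.ne']
    have hdd : d = (d - 1) + 1 := (Nat.succ_pred_eq_of_pos hd).symm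
    rw [hdd, pow_succ]
    field_simp
    ring_nf
    simp
  have hgt1 : 1 < a * b^(d-1) :=
    john_numeric d hd h ε σ a b hhd hd1 hε0 hε12 hεb hσdef hadef hb2 hb0
  rw [hdetG, abs_of_pos (mul_pos ha (pow_pos hb0 _))] at hdetG1
  linarith

end JohnAux

theorem stmt_2 (d : ℕ) (K E : Set (EuclideanSpace ℝ (Fin d)))
    (z : EuclideanSpace ℝ (Fin d))
    (hKcompact : IsCompact K) (hKconv : Convex ℝ K)
    (hKint : (interior K).Nonempty)
    (hE : IsEllipsoidAt E z) (hEK : E ⊆ K)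
    (hmax : ∀ E' : Set (EuclideanSpace ℝ (Fin d)), IsEllipsoid E' → E' ⊆ K →
      volume E' ≤ volume E) :
    {p : EuclideanSpace ℝ (Fin d) | ∀ x ∈ (fun y => y - z) '' K, inner ℝ p x ≤ (1 : ℝ)} ⊆
      (-(d : ℝ)) •
        {p : EuclideanSpace ℝ (Fin d) | ∀ x ∈ (fun y => y - z) '' K, inner ℝ p x ≤ (1 : ℝ)} := by
  intro p hp
  rcases Nat.eq_zero_or_pos d with hd0 | hd
  · subst hd0
    have hsub : ∀ x y : EuclideanSpace ℝ (Fin 0), x = y := fun x y =>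
      PiLp.ext fun i => i.elim0
    exact ⟨p, hp, hsub _ _⟩
  · obtain ⟨L, hEdef⟩ := hE
    have hjb := john_bound hd K hKconv z L (hEdef ▸ hEK)
      (fun E' h1 h2 => hEdef ▸ hmax E' h1 h2)
    have hd0' : (0:ℝ) < (d:ℝ) := by exact_mod_cast hd
    have hlow : ∀ x ∈ K, -(d:ℝ) ≤ (inner ℝ p (x - z) : ℝ) := by
      intro x hxK
      set y := L.symm (x - z) with hy
      have hyd : ‖y‖ ≤ d := hjb x hxK
      set w : EuclideanSpace ℝ (Fin d) := -((d:ℝ)⁻¹ • y) with hw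
      have hwball : w ∈ Metric.closedBall (0 : EuclideanSpace ℝ (Fin d)) 1 := by
        rw [Metric.mem_closedBall, dist_zero_right, hw, norm_neg, norm_smul, Real.norm_eq_abs,
          abs_of_nonneg (by positivity : (0:ℝ) ≤ (d:ℝ)⁻¹)]
        rw [← inv_mul_cancel₀ hd0'.ne']
        exact mul_le_mul_of_nonneg_left hyd (by positivity)
      have hmem : z + L w ∈ K := hEK (hEdef ▸ mem_image_of_mem _ hwball)
      have h1 : (inner ℝ p ((z + L w) - z) : ℝ) ≤ 1 := hp _ ⟨z + L w, hmem, rfl⟩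
      have h2 : (z + L w) - z = -((d:ℝ)⁻¹ • (x - z)) := by
        have : L w = -((d:ℝ)⁻¹ • (x - z)) := by
          rw [hw, map_neg, L.map_smul, hy, LinearEquiv.apply_symm_apply]
        rw [this]; abel
      rw [h2] at h1
      rw [inner_neg_right, real_inner_smul_right] at h1
      nlinarith [mul_inv_cancel₀ hd0'.ne']
    refine ⟨(-(d:ℝ))⁻¹ • p, ?_, ?_⟩
    · rintro _ ⟨x, hxK, rfl⟩
      rw [real_inner_smul_left, inv_neg]
      have := hlow x hxK
      have h2 : (0:ℝ) ≤ ((d:ℝ))⁻¹ := by positivity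
      nlinarith [mul_inv_cancel₀ hd0'.ne']
    · show (-(d:ℝ)) • ((-(d:ℝ))⁻¹ • p) = p
      rw [smul_smul, mul_inv_cancel₀ (neg_ne_zero.mpr hd0'.ne'), one_smul]
end

section
/- Let S be a simplex of maximal volume contained in a convex body Q ⊆ ℝ^d, and let v be the centroid of S. Then Q ⊆ −d(S − v) + v. -/
open MeasureTheory Set Pointwise

theorem det_id_add_smulRight {𝕜 M : Type*} [Field 𝕜] [AddCommGroup M] [Module 𝕜 M]
    [FiniteDimensional 𝕜 M] (φ : M →ₗ[𝕜] 𝕜) (c : M) :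
    LinearMap.det (LinearMap.id + φ.smulRight c) = 1 + φ c := by
  classical
  let b := Module.finBasis 𝕜 M
  rw [← LinearMap.det_toMatrix b]
  have h : LinearMap.toMatrix b b (LinearMap.id + φ.smulRight c)
      = 1 + Matrix.replicateCol Unit (fun i => b.repr c i) * Matrix.replicateRow Unit (fun j => φ (b j)) := by
    ext i j
    simp only [LinearMap.toMatrix_apply, LinearMap.add_apply, LinearMap.id_apply,
      LinearMap.smulRight_apply, map_add, _root_.map_smul, Module.Basis.repr_self, Matrix.add_apply,
      Matrix.one_apply, Matrix.mul_apply, Matrix.replicateCol_apply, Matrix.replicateRow_apply,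
      Finsupp.coe_add, Finsupp.coe_smul, Pi.add_apply, Pi.smul_apply, smul_eq_mul,
      Finsupp.single_apply, Finset.univ_unique, Finset.sum_singleton]
    rw [mul_comm]
    congr 1
    simp [eq_comm]
  rw [h, Matrix.det_one_add_replicateCol_mul_replicateRow]
  congr 1
  have : φ c = φ (∑ i, b.repr c i • b i) := by rw [b.sum_repr]
  rw [this, map_sum]
  simp [dotProduct, mul_comm]

theorem stmt_3 (d : ℕ) (Q : Set (EuclideanSpace ℝ (Fin d)))
    (hQcompact : IsCompact Q) (hQconv : Convex ℝ Q)
    (hQint : (interior Q).Nonempty)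
    (p : Fin (d + 1) → EuclideanSpace ℝ (Fin d))
    (hp : AffineIndependent ℝ p)
    (hSQ : convexHull ℝ (Set.range p) ⊆ Q)
    (hmax : ∀ q : Fin (d + 1) → EuclideanSpace ℝ (Fin d), AffineIndependent ℝ q →
      convexHull ℝ (Set.range q) ⊆ Q →
      volume (convexHull ℝ (Set.range q)) ≤ volume (convexHull ℝ (Set.range p)))
    (v : EuclideanSpace ℝ (Fin d)) (hv : v = Finset.univ.centroid ℝ p) :
    Q ⊆ (fun x => (-(d : ℝ)) • (x - v) + v) '' convexHull ℝ (Set.range p) := by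
  classical
  have htop : affineSpan ℝ (Set.range p) = ⊤ := by
    rw [hp.affineSpan_eq_top_iff_card_eq_finrank_add_one]
    simp [finrank_euclideanSpace_fin]
  let b : AffineBasis (Fin (d + 1)) ℝ (EuclideanSpace ℝ (Fin d)) := ⟨p, hp, htop⟩
  have hb : ⇑b = p := rfl
  set S := convexHull ℝ (Set.range p) with hS
  -- volume of S is positive and finite
  have hS0 : volume S ≠ 0 := by
    have hint : (interior S).Nonempty := by
      refine ⟨Finset.univ.centroid ℝ b, ?_⟩
      simpa [hb] using b.centroid_mem_interior_convexHull
    exact ((isOpen_interior.measure_pos volume hint).trans_le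
      (measure_mono interior_subset)).ne'
  have hStop : volume S ≠ ⊤ :=
    ((measure_mono hSQ).trans_lt hQcompact.measure_lt_top).ne
  -- key claim : barycentric coordinates of points of Q are ≤ 1
  have key : ∀ i, ∀ x ∈ Q, b.coord i x ≤ 1 := by
    intro i x hx
    by_contra hgt
    push_neg at hgt
    set c : EuclideanSpace ℝ (Fin d) := x - p i with hc
    set φ : EuclideanSpace ℝ (Fin d) →ₗ[ℝ] ℝ := (b.coord i).linear with hφ
    set L : EuclideanSpace ℝ (Fin d) →ₗ[ℝ] EuclideanSpace ℝ (Fin d) := LinearMap.id + φ.smulRight c with hL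
    have hφc : φ c = b.coord i x - 1 := by
      have h1 : φ c = b.coord i x - b.coord i (p i) := by
        have h := (b.coord i).linearMap_vsub x (p i)
        rw [vsub_eq_sub, vsub_eq_sub] at h
        exact h
      have h2 : b.coord i (p i) = 1 := by
        have := b.coord_apply i i
        simpa [hb] using this
      rw [h1, h2]
    have hdet : LinearMap.det L = b.coord i x := by
      rw [hL, det_id_add_smulRight, hφc]; ring
    -- the affine map replacing vertex i
    let A : EuclideanSpace ℝ (Fin d) →ᵃ[ℝ] EuclideanSpace ℝ (Fin d) :=
      { toFun := fun y => y + b.coord i y • c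
        linear := L
        map_vadd' := by
          intro z w
          have hcoord : b.coord i (w +ᵥ z) = φ w + b.coord i z := by
            rw [AffineMap.map_vadd]; rfl
          show (w + z) + b.coord i (w + z) • c = (w + φ w • c) + (z + b.coord i z • c)
          rw [show b.coord i (w + z) = φ w + b.coord i z from hcoord, add_smul]
          abel }
    have hA : ∀ y, A y = y + b.coord i y • c := fun _ => rfl
    have hAp : A ∘ p = Function.update p i x := by
      funext j
      by_cases hj : j = i
      · subst hj
        have h2 : b.coord j (p j) = 1 := by
          have := b.coord_apply j j; simpa [hb] using this
        simp [hA, h2, hc, Function.update_self]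
      · have h2 : b.coord i (p j) = 0 := by
          have := b.coord_apply i j; simpa [hb, Ne.symm hj, hj] using this
        simp [hA, h2, Function.update_of_ne hj]
    have hdet0 : LinearMap.det L ≠ 0 := by rw [hdet]; linarith
    have hLinj : Function.Injective L := by
      have h := (L.equivOfDetNeZero hdet0).injective
      have hco : ⇑(L.equivOfDetNeZero hdet0) = ⇑L := by
        funext y
        exact DFunLike.congr_fun (LinearEquiv.coe_ofIsUnitDet _) y
      rwa [hco] at h
    have hAinj : Function.Injective A := by
      intro y₁ y₂ hy
      have : A.linear (y₁ -ᵥ y₂) = A y₁ -ᵥ A y₂ := A.linearMap_vsub y₁ y₂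
      rw [hy, vsub_self] at this
      have h0 : y₁ -ᵥ y₂ = 0 := hLinj (by simpa using this)
      exact sub_eq_zero.mp h0
    have hqi : AffineIndependent ℝ (Function.update p i x) := by
      rw [← hAp]; exact hp.map' A hAinj
    have hsub : convexHull ℝ (Set.range (Function.update p i x)) ⊆ Q := by
      apply convexHull_min _ hQconv
      rintro _ ⟨j, rfl⟩
      by_cases hj : j = i
      · subst hj; rw [Function.update_self]; exact hx
      · rw [Function.update_of_ne hj]; exact hSQ (subset_convexHull ℝ _ (mem_range_self j))
    -- volume computation
    have himg : convexHull ℝ (Set.range (Function.update p i x)) = A '' S := by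
      rw [← hAp, Set.range_comp, AffineMap.image_convexHull]
    have hvol : volume (A '' S) = ENNReal.ofReal |LinearMap.det L| * volume S := by
      have hAL : ⇑A = fun y => (b.coord i 0 • c) +ᵥ L y := by
        funext y
        have : b.coord i y = φ y + b.coord i 0 := by
          have h := (b.coord i).linearMap_vsub y 0
          rw [vsub_eq_sub, vsub_eq_sub] at h
          have h' : φ (y - 0) = b.coord i y - b.coord i 0 := h
          rw [sub_zero] at h'
          linarith
        show y + b.coord i y • c = b.coord i 0 • c + (y + φ y • c)
        rw [this, add_smul]
        abel
      rw [hAL]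
      have : (fun y => (b.coord i 0 • c) +ᵥ L y) '' S
          = (b.coord i 0 • c) +ᵥ (⇑L '' S) := by
        rw [← Set.image_vadd, Set.image_image]
      rw [this, measure_vadd, Measure.addHaar_image_linearMap]
    have hlt : volume S < volume (convexHull ℝ (Set.range (Function.update p i x))) := by
      rw [himg, hvol, hdet, abs_of_pos (by linarith)]
      conv_lhs => rw [← one_mul (volume S)]
      rw [ENNReal.mul_lt_mul_iff_left hS0 hStop]
      exact ENNReal.one_lt_ofReal.mpr hgt
    exact absurd (hmax _ hqi hsub) (not_le.mpr hlt)
  -- now conclude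
  rcases Nat.eq_zero_or_pos d with hd | hd
  · subst hd
    intro x _
    exact ⟨p 0, subset_convexHull ℝ _ (mem_range_self 0), Subsingleton.elim _ _⟩
  · intro x hx
    have hdR : (0 : ℝ) < d := by exact_mod_cast hd
    have hdne : (d : ℝ) ≠ 0 := hdR.ne'
    refine ⟨v - (d : ℝ)⁻¹ • (x - v), ?_, ?_⟩
    · have hgoal : ∀ i, 0 ≤ b.coord i (v - (d : ℝ)⁻¹ • (x - v)) := by
        intro i
        have hcv : b.coord i v = ((d : ℝ) + 1)⁻¹ := by
          rw [hv, ← hb]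
          have := b.coord_apply_centroid (s := Finset.univ) (Finset.mem_univ i)
          rw [this]
          norm_num [Finset.card_univ]
        have hcx : b.coord i x ≤ 1 := key i x hx
        have hy : v - (d : ℝ)⁻¹ • (x - v) = AffineMap.lineMap v x (-(d : ℝ)⁻¹) := by
          show v - (d : ℝ)⁻¹ • (x - v) = (-(d : ℝ)⁻¹) • (x -ᵥ v) +ᵥ v
          show v - (d : ℝ)⁻¹ • (x - v) = (-(d : ℝ)⁻¹) • (x - v) + v
          rw [neg_smul]; abel
        rw [hy, AffineMap.apply_lineMap, AffineMap.lineMap_apply, hcv]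
        simp only [vsub_eq_sub, vadd_eq_add, smul_eq_mul]
        have hexp : -((d : ℝ))⁻¹ * (b.coord i x - ((d : ℝ) + 1)⁻¹) + ((d : ℝ) + 1)⁻¹
            = (1 - b.coord i x) / d := by
          field_simp
          ring
        have hnn : (0 : ℝ) ≤ (1 - b.coord i x) / d :=
          div_nonneg (by linarith) hdR.le
        linarith [hexp, hnn]
      have : v - (d : ℝ)⁻¹ • (x - v) ∈ convexHull ℝ (Set.range ⇑b) := by
        rw [b.convexHull_eq_nonneg_coord]
        exact hgoal
      exact this
    · show (-(d : ℝ)) • (v - (d : ℝ)⁻¹ • (x - v) - v) + v = x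
      have h1 : v - (d : ℝ)⁻¹ • (x - v) - v = -((d : ℝ)⁻¹ • (x - v)) := by abel
      rw [h1, smul_neg, neg_smul, neg_neg, smul_smul, mul_inv_cancel₀ hdne, one_smul]
      abel
end

section
/- Let Q ⊆ ℝ^d be a convex body with 0 ∈ Q and Q ⊆ −λQ for some λ > 0, let S ⊆ Q be a simplex of maximal volume with centroid v, and let Q' be any set of extreme points of Q whose convex hull contains both all vertices of S and a boundary point of Q on the ray from 0 in direction −v. Then v ∈ −λ·conv(Q'). -/
open MeasureTheory Set Pointwise

theorem stmt_18 (d : ℕ) (lam : ℝ) (hlam : 0 < lam)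
    (Q : Set (EuclideanSpace ℝ (Fin d)))
    (hQcompact : IsCompact Q) (hQconv : Convex ℝ Q)
    (hQint : (interior Q).Nonempty)
    (h0Q : (0 : EuclideanSpace ℝ (Fin d)) ∈ Q)
    (hQlam : Q ⊆ (-lam) • Q)
    -- `S = convexHull ℝ (Set.range p)` is a maximal-volume simplex contained in `Q`
    (p : Fin (d + 1) → EuclideanSpace ℝ (Fin d))
    (hp : AffineIndependent ℝ p)
    (hSQ : convexHull ℝ (Set.range p) ⊆ Q)
    (hmax : ∀ q : Fin (d + 1) → EuclideanSpace ℝ (Fin d), AffineIndependent ℝ q →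
      convexHull ℝ (Set.range q) ⊆ Q →
      volume (convexHull ℝ (Set.range q)) ≤ volume (convexHull ℝ (Set.range p)))
    (v : EuclideanSpace ℝ (Fin d)) (hv : v = Finset.univ.centroid ℝ p)
    (Q' : Set (EuclideanSpace ℝ (Fin d))) (hQ' : Q' ⊆ Q.extremePoints ℝ)
    (hvert : Set.range p ⊆ convexHull ℝ Q')
    -- `y` is a boundary point of `Q` on the ray from the origin in direction `-v`
    (y : EuclideanSpace ℝ (Fin d)) (hy : y ∈ frontier Q)
    (hray : ∃ t : ℝ, 0 ≤ t ∧ y = t • (-v))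
    (hyQ' : y ∈ convexHull ℝ Q') :
    v ∈ (-lam) • convexHull ℝ Q' := by
  classical
  obtain ⟨t, ht0, hyeq⟩ := hray
  have hlamne : lam ≠ 0 := ne_of_gt hlam
  -- the centroid lies in the convex hull of the vertices
  have hvhull : v ∈ convexHull ℝ (Set.range p) := by
    rw [hv, Finset.centroid_def]
    refine affineCombination_mem_convexHull ?_ ?_
    · intro i _
      simp [Finset.centroidWeights]
      positivity
    · exact Finset.univ.sum_centroidWeights_eq_one_of_nonempty ℝ Finset.univ_nonempty
  have hvQ' : v ∈ convexHull ℝ Q' :=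
    convexHull_min hvert (convex_convexHull ℝ Q') hvhull
  have hvQ : v ∈ Q := hSQ hvhull
  -- `0` is an interior point of `Q`
  have h0int : (0 : EuclideanSpace ℝ (Fin d)) ∈ interior Q := by
    by_contra h0
    obtain ⟨f, hf⟩ := geometric_hahn_banach_open_point hQconv.interior isOpen_interior h0
    obtain ⟨a, ha⟩ := hQint
    have hfneg : ∀ b ∈ interior Q, f b < 0 := by
      intro b hb
      simpa using hf b hb
    have key : ∀ x ∈ Q, f x ≤ 0 := by
      intro x hx
      have hcont : Continuous fun ε : ℝ => f (ε • a + (1 - ε) • x) := by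
        fun_prop
      have ht : Filter.Tendsto (fun ε : ℝ => f (ε • a + (1 - ε) • x))
          (nhdsWithin 0 (Set.Ioo (0:ℝ) 1)) (nhds (f x)) := by
        have h0' := hcont.tendsto 0
        simp only [zero_smul, sub_zero, one_smul, zero_add] at h0'
        exact h0'.mono_left nhdsWithin_le_nhds
      haveI : (nhdsWithin (0:ℝ) (Set.Ioo (0:ℝ) 1)).NeBot := by
        refine mem_closure_iff_nhdsWithin_neBot.mp ?_
        rw [closure_Ioo one_ne_zero.symm]
        exact ⟨le_refl 0, zero_le_one⟩
      refine le_of_tendsto ht ?_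
      filter_upwards [self_mem_nhdsWithin] with ε hε
      have hmem : ε • a + (1 - ε) • x ∈ interior Q :=
        hQconv.combo_interior_self_mem_interior ha hx hε.1 (by linarith [hε.2]) (by ring)
      exact (hfneg _ hmem).le
    have key2 : ∀ x ∈ Q, 0 ≤ f x := by
      intro x hx
      obtain ⟨q, hq, rfl⟩ := hQlam hx
      have := key q hq
      have : f ((-lam) • q) = -lam * f q := by simp
      rw [this]
      nlinarith [key q hq]
    have h1 := hfneg a ha
    have h2 := key2 a (interior_subset ha)
    linarith
  -- main case analysis
  by_cases hv0 : v = 0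
  · refine Set.mem_smul_set.mpr ⟨v, hvQ', ?_⟩
    rw [hv0]; simp
  -- t is positive
  have htpos : 0 < t := by
    rcases lt_or_eq_of_le ht0 with h | h
    · exact h
    · exfalso
      have : y = 0 := by rw [hyeq, ← h, zero_smul]
      rw [this] at hy
      exact hy.2 h0int
  -- `-(1/lam) • v ∈ Q`
  have hqQ : (-(1/lam)) • v ∈ Q := by
    obtain ⟨q, hq, hqe⟩ := hQlam hvQ
    have : (-(1/lam)) • v = q := by
      rw [← hqe, smul_smul]
      rw [show (-(1/lam)) * -lam = 1 by field_simp]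
      simp
    rw [this]; exact hq
  -- `t ≥ 1/lam`
  have htge : 1/lam ≤ t := by
    by_contra hlt
    push_neg at hlt
    -- then y is a proper convex combination of 0 and -(1/lam)•v, hence interior
    have hb1 : lam * t < 1 := by
      calc lam * t < lam * (1/lam) := by exact (mul_lt_mul_iff_right₀ hlam).mpr hlt
        _ = 1 := by field_simp
    have hbpos : 0 < lam * t := by positivity
    have hyc : y = (1 - lam * t) • (0 : EuclideanSpace ℝ (Fin d)) + (lam * t) • ((-(1/lam)) • v) := by
      have hsc : lam * t * -(1/lam) = -t := by field_simp
      rw [hyeq, smul_zero, zero_add, smul_smul, hsc, smul_neg, neg_smul]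
    have : y ∈ interior Q := by
      rw [hyc]
      exact hQconv.combo_interior_self_mem_interior h0int hqQ (by linarith) (by linarith) (by ring)
    exact hy.2 this
  -- express `-(1/lam) • v` as a convex combination of `y` and `v`
  set a : ℝ := (1 + 1/lam) / (1 + t) with ha_def
  have h1t : (0:ℝ) < 1 + t := by linarith
  have hapos : 0 < a := by
    apply div_pos
    · have : 0 < 1/lam := by positivity
      linarith
    · exact h1t
  have hale : a ≤ 1 := by
    rw [ha_def, div_le_one h1t]
    linarith
  have hcomb : a • y + (1 - a) • v = (-(1/lam)) • v := by
    rw [hyeq]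
    have hsc : a * (-t) + (1 - a) = -(1/lam) := by
      rw [ha_def]
      field_simp
      ring
    calc a • (t • (-v)) + (1 - a) • v = (a * (-t) + (1 - a)) • v := by
          rw [smul_smul, smul_neg, ← neg_smul, add_smul]
          ring_nf
        _ = (-(1/lam)) • v := by rw [hsc]
  have hwQ' : (-(1/lam)) • v ∈ convexHull ℝ Q' := by
    rw [← hcomb]
    exact (convex_convexHull ℝ Q') hyQ' hvQ' hapos.le (by linarith) (by ring)
  refine Set.mem_smul_set.mpr ⟨(-(1/lam)) • v, hwQ', ?_⟩
  rw [smul_smul]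
  rw [show -lam * -(1/lam) = 1 by field_simp]
  simp
end
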